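/- Define W(x,u) for x ∈ (0,1], u > 0, α > 0 by (μ/λ)W = 1 + α + α(1-x)((1 - e^{-αxu})/(αx) - u) for u ≤ 1 and (μ/λ)W = 1 + α + α(1-x)((e^{-αx(u-1)} - e^{-αxu})/(αx) - 1) for u ≥ 1. Then for each fixed u > 0, W is strictly convex in x on (0,1], i.e. ∂²W/∂x² > 0. -/

import Mathlib

open Real

noncomputable def Qf (β x : ℝ) : ℝ := (x⁻¹ - 1) * (1 - Real.exp (-(β*x)))
noncomputable def Q1 (β x : ℝ) : ℝ :=
  -(x^2)⁻¹ * (1 - Real.exp (-(β*x))) + (x⁻¹ - 1) * (β * Real.exp (-(β*x)))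
noncomputable def Q2 (β x : ℝ) : ℝ :=
  2*(x^3)⁻¹*(1 - Real.exp (-(β*x))) - 2*β*(x^2)⁻¹*Real.exp (-(β*x))
    - β^2*(x⁻¹ - 1)*Real.exp (-(β*x))

lemma hexpd (β x : ℝ) : HasDerivAt (fun y : ℝ => Real.exp (-(β*y))) (-β * Real.exp (-(β*x))) x := by
  have h : HasDerivAt (fun y : ℝ => -(β*y)) (-β) x := by
    simpa using ((hasDerivAt_id x).const_mul β).fun_neg
  simpa [mul_comm] using h.exp

lemma hQ (β x : ℝ) (hx : x ≠ 0) : HasDerivAt (fun y => Qf β y) (Q1 β x) x := by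
  have h1 : HasDerivAt (fun y : ℝ => y⁻¹ - 1) (-(x^2)⁻¹) x := by
    simpa using (hasDerivAt_inv hx).sub_const 1
  have h2 : HasDerivAt (fun y : ℝ => 1 - Real.exp (-(β*y))) (β * Real.exp (-(β*x))) x := by
    simpa using (hexpd β x).const_sub 1
  have := h1.fun_mul h2
  unfold Qf Q1
  convert this using 1

lemma hQ1 (β x : ℝ) (hx : x ≠ 0) : HasDerivAt (fun y => Q1 β y) (Q2 β x) x := by
  have hx2 : (x:ℝ)^2 ≠ 0 := pow_ne_zero 2 hx
  have ha : HasDerivAt (fun y : ℝ => -(y^2)⁻¹) (2*(x^3)⁻¹) x := by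
    have := ((hasDerivAt_pow 2 x).fun_inv hx2).fun_neg
    refine this.congr_deriv ?_
    field_simp
    ring
  have h2 : HasDerivAt (fun y : ℝ => 1 - Real.exp (-(β*y))) (β * Real.exp (-(β*x))) x := by
    simpa using (hexpd β x).const_sub 1
  have hb : HasDerivAt (fun y : ℝ => y⁻¹ - 1) (-(x^2)⁻¹) x := by
    simpa using (hasDerivAt_inv hx).sub_const 1
  have hc : HasDerivAt (fun y : ℝ => β * Real.exp (-(β*y))) (β * (-β * Real.exp (-(β*x)))) x :=
    (hexpd β x).const_mul β
  have := (ha.fun_mul h2).fun_add (hb.fun_mul hc)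
  unfold Q1 Q2
  refine this.congr_deriv ?_
  field_simp
  ring

lemma exp_quad {d : ℝ} (hd : 0 < d) : 1 + d + d^2/2 < Real.exp d := by
  have h := Real.sum_le_exp_of_nonneg hd.le 4
  have : (∑ i ∈ Finset.range 4, d ^ i / i.factorial) = 1 + d + d^2/2 + d^3/6 := by
    simp [Finset.sum_range_succ, Nat.factorial]
  nlinarith [pow_pos hd 3]

lemma Q2_eq (β x : ℝ) (hx : x ≠ 0) :
    Q2 β x = (2 - (2 + 2*(β*x) + (β*x)^2*(1-x)) * Real.exp (-(β*x))) / x^3 := by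
  unfold Q2
  field_simp
  ring

lemma key0 (g d x : ℝ) (hg0 : 0 ≤ g) (hd : 0 < d) (hx : 0 < x) (hs : 0 < 1 - x) :
    (2 + 2*(g+d) + (g+d)^2*(1-x)) * Real.exp (-(g+d))
      < (2 + 2*g + g^2*(1-x)) * Real.exp (-g) := by
  have hexp := exp_quad hd
  have hEb : (0:ℝ) < Real.exp (-(g+d)) := Real.exp_pos _
  have hEg : Real.exp (-g) = Real.exp (-(g+d)) * Real.exp d := by
    rw [← Real.exp_add]; ring_nf
  have h2 : (2 + 2*g + g^2*(1-x)) * (1 + d + d^2/2) ≤ (2 + 2*g + g^2*(1-x)) * Real.exp d :=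
    mul_le_mul_of_nonneg_left hexp.le (by nlinarith)
  have h1 : 2 + 2*(g+d) + (g+d)^2*(1-x) < (2 + 2*g + g^2*(1-x)) * Real.exp d := by
    nlinarith [h2, mul_nonneg (mul_nonneg (mul_nonneg hg0 hg0) hs.le) hd.le,
      mul_nonneg (mul_nonneg hg0 hd.le) hx.le,
      mul_pos (mul_pos hd hd) hx,
      mul_nonneg hg0 (mul_nonneg hd.le hd.le),
      mul_nonneg (mul_nonneg (mul_nonneg hg0 hg0) hs.le) (mul_nonneg hd.le hd.le)]
  rw [hEg]
  calc (2 + 2*(g+d) + (g+d)^2*(1-x)) * Real.exp (-(g+d))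
      < ((2 + 2*g + g^2*(1-x)) * Real.exp d) * Real.exp (-(g+d)) :=
        mul_lt_mul_of_pos_right h1 hEb
    _ = (2 + 2*g + g^2*(1-x)) * (Real.exp (-(g+d)) * Real.exp d) := by ring

lemma key (β γ x : ℝ) (hγ : 0 ≤ γ) (hβγ : γ < β) (hx : 0 < x) (hx1 : x < 1) :
    Q2 γ x < Q2 β x := by
  rw [Q2_eq β x hx.ne', Q2_eq γ x hx.ne',
    div_lt_div_iff_of_pos_right (show (0:ℝ) < x^3 by positivity)]
  have h := key0 (γ*x) ((β-γ)*x) x (mul_nonneg hγ hx.le)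
    (mul_pos (by linarith) hx) hx (by linarith)
  rw [show γ * x + (β - γ) * x = β * x by ring] at h
  linarith

lemma aux (c α β γ k : ℝ) (f : ℝ → ℝ) (hc : 0 < c) (hγ : 0 ≤ γ) (hβγ : γ < β)
    (hf : ∀ x : ℝ, x ≠ 0 → f x = c*(1+α) + c*(Qf β x - Qf γ x) - c*α*k*(1-x)) :
    StrictConvexOn ℝ (Set.Ioc (0:ℝ) 1) f := by
  set g : ℝ → ℝ := fun y => c*(1+α) + c*(Qf β y - Qf γ y) - c*α*k*(1-y) with hgdef
  have hev : ∀ x : ℝ, x ≠ 0 → f =ᶠ[nhds x] g := by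
    intro x hx
    filter_upwards [isOpen_compl_singleton.mem_nhds (by simpa using hx :
      x ∈ ({0}ᶜ : Set ℝ))] with y hy
    exact hf y hy
  have hD1 : ∀ x : ℝ, x ≠ 0 → HasDerivAt f (c*(Q1 β x - Q1 γ x) + c*α*k) x := by
    intro x hx
    have hg : HasDerivAt g (c*(Q1 β x - Q1 γ x) + c*α*k) x := by
      have h1 : HasDerivAt (fun y => c*(1+α) + c*(Qf β y - Qf γ y))
          (c*(Q1 β x - Q1 γ x)) x := by
        simpa using (((hQ β x hx).sub (hQ γ x hx)).const_mul c).const_add (c*(1+α))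
      have h2 : HasDerivAt (fun y : ℝ => c*α*k*(1-y)) (-(c*α*k)) x := by
        simpa using ((hasDerivAt_id x).const_sub 1).const_mul (c*α*k)
      have := h1.fun_sub h2
      refine this.congr_deriv ?_
      ring
    exact hg.congr_of_eventuallyEq (hev x hx)
  have hderiv : ∀ x : ℝ, x ≠ 0 → deriv f x = c*(Q1 β x - Q1 γ x) + c*α*k := by
    intro x hx; exact (hD1 x hx).deriv
  apply strictConvexOn_of_deriv2_pos (convex_Ioc 0 1)
  · intro x hx
    exact (hD1 x (ne_of_gt hx.1)).continuousAt.continuousWithinAt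
  · rw [interior_Ioc]
    intro x hx
    have hx0 : x ≠ 0 := ne_of_gt hx.1
    have hev2 : deriv f =ᶠ[nhds x] (fun y => c*(Q1 β y - Q1 γ y) + c*α*k) := by
      filter_upwards [isOpen_compl_singleton.mem_nhds (by simpa using hx0 :
        x ∈ ({0}ᶜ : Set ℝ))] with y hy
      exact hderiv y hy
    have hD2 : HasDerivAt (fun y => c*(Q1 β y - Q1 γ y) + c*α*k)
        (c*(Q2 β x - Q2 γ x)) x := by
      simpa using ((((hQ1 β x hx0).sub (hQ1 γ x hx0)).const_mul c).add_const (c*α*k))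
    have : deriv^[2] f x = c*(Q2 β x - Q2 γ x) := by
      show deriv (deriv f) x = _
      rw [hev2.deriv_eq, hD2.deriv]
    rw [this]
    have := key β γ x hγ hβγ hx.1 hx.2
    have : 0 < Q2 β x - Q2 γ x := by linarith
    positivity

theorem utilization_strictConvex (lam μ α : ℝ) (hlam : 0 < lam) (hμ : 0 < μ) (hα : 0 < α)
    (u : ℝ) (hu : 0 < u) :
    StrictConvexOn ℝ (Set.Ioc (0 : ℝ) 1)
      (fun x => (lam / μ) * (1 + α + α * (1 - x) *
        (if u ≤ 1 then (1 - Real.exp (-(α * x * u))) / (α * x) - u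
          else (Real.exp (-(α * x * (u - 1))) - Real.exp (-(α * x * u))) / (α * x) - 1))) := by
  have hc : 0 < lam / μ := div_pos hlam hμ
  by_cases hu1 : u ≤ 1
  · apply aux (lam/μ) α (α*u) 0 u _ hc le_rfl (by positivity)
    intro x hx
    simp only [if_pos hu1]
    unfold Qf
    rw [show α*u*x = α*x*u by ring]
    simp only [zero_mul, neg_zero, Real.exp_zero, sub_self, mul_zero]
    have hax : α*x ≠ 0 := mul_ne_zero hα.ne' hx
    field_simp
    ring
  · apply aux (lam/μ) α (α*u) (α*(u-1)) 1 _ hc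
      (by nlinarith [not_le.mp hu1]) (by nlinarith [not_le.mp hu1])
    intro x hx
    simp only [if_neg hu1]
    unfold Qf
    rw [show α*u*x = α*x*u by ring, show α*(u-1)*x = α*x*(u-1) by ring]
    have hax : α*x ≠ 0 := mul_ne_zero hα.ne' hx
    field_simp
    ring
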